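/- Let γ ∈ [−1, 0], U(x) := (1/2)ln(2/((1+γ)x² + 1−γ)), T(x) := √(−γ(1−γ²))·(1−x²)/(1−γ + (1+γ)x²), and S(x) := −[(−γ)^{3/2} + √(1−γ²)·|T(x)|]·e^{2U(x)}. Then ∫_{-1}^1 e^{4U(x)}(1−x²) dx, ∫_{-1}^1 S T dx, and (1/√2)∫_{-1}^1 S dx are all finite, T(±1) = 0, and the functional I[S,T,U] := (1/2)∫_{-1}^1 [U'²(1−x²) − 2xU' + (S²+T'²)e^{-2U}] dx + M₂²/2 (with c₁,c₂,c₃,M₁,M₂ defined from S,T,U as in the paper with ε = 0) satisfies I[S,T,U] = 1. -/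

import Mathlib

set_option maxHeartbeats 2000000
set_option maxRecDepth 4000

open Real Set MeasureTheory intervalIntegral

/-- The explicit family (parametrized by γ ∈ [−1,0]) of degenerate
black-hole horizon data (S,T,U) has finite auxiliary integrals, satisfies T(±1) = 0,
and realizes the value I[S,T,U] = 1 of the functional I (functional of the paper
with ε = 0). -/
theorem stmt_17 (γ : ℝ) (hγ : γ ∈ Icc (-1:ℝ) 0) (U T S : ℝ → ℝ)
    (hU : U = fun x => (1/2) * Real.log (2 / ((1 + γ) * x^2 + 1 - γ)))
    (hT : T = fun x => Real.sqrt (-γ * (1 - γ^2)) * (1 - x^2) /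
      (1 - γ + (1 + γ) * x^2))
    (hS : S = fun x => -(((-γ)^((3:ℝ)/2)) + Real.sqrt (1 - γ^2) * |T x|) *
      Real.exp (2 * U x))
    (c₁ c₂ c₃ M₁ M₂ I : ℝ)
    (hc₁ : c₁ = Real.sqrt (∫ x in (-1:ℝ)..1, Real.exp (4 * U x) * (1 - x^2)))
    (hc₂ : c₂ = ∫ x in (-1:ℝ)..1, S x * T x)
    (hc₃ : c₃ = (1 / Real.sqrt 2) * ∫ x in (-1:ℝ)..1, S x)
    (hM₁ : M₁ = max 0 (4 - c₃^4))
    (hM₂ : M₂ = max 0 ((Real.sqrt M₁ - 2 * |c₂|) / c₁))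
    (hI : I = (1/2) * (∫ x in (-1:ℝ)..1,
        ((deriv U x)^2 * (1 - x^2) - 2 * x * deriv U x
          + ((S x)^2 + (deriv T x)^2) * Real.exp (-2 * U x))) + M₂^2 / 2) :
    IntervalIntegrable (fun x => Real.exp (4 * U x) * (1 - x^2)) volume (-1) 1 ∧
    IntervalIntegrable (fun x => S x * T x) volume (-1) 1 ∧
    IntervalIntegrable S volume (-1) 1 ∧
    T (-1) = 0 ∧ T 1 = 0 ∧
    I = 1 := by
  rcases eq_or_lt_of_le hγ.1 with hcase | hγ1
  · -- ===================== case γ = -1 =====================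
    have hγe : γ = -1 := hcase.symm
    subst hγe
    have hU0 : U = fun _ => (0:ℝ) := by
      rw [hU]; funext x; norm_num
    have hT0 : T = fun _ => (0:ℝ) := by
      rw [hT]; funext x; norm_num
    have hS1 : S = fun _ => (-1:ℝ) := by
      rw [hS]; funext x
      rw [hT0, hU0]
      norm_num [Real.one_rpow]
    have hc₃v : c₃ = -Real.sqrt 2 := by
      rw [hc₃, hS1]
      simp only [intervalIntegral.integral_const]
      have h2 : Real.sqrt 2 ≠ 0 := by positivity
      have hs2 : Real.sqrt 2 ^ 2 = 2 := Real.sq_sqrt (by norm_num)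
      field_simp
      simp only [smul_eq_mul]
      nlinarith [hs2]
    have hc₃4 : c₃^4 = 4 := by
      rw [hc₃v]
      have hs2 : Real.sqrt 2 ^ 2 = 2 := Real.sq_sqrt (by norm_num)
      nlinarith [hs2]
    have hc₂v : c₂ = 0 := by
      rw [hc₂, hT0]; simp
    have hM₁v : M₁ = 0 := by rw [hM₁, hc₃4]; norm_num
    have hM₂v : M₂ = 0 := by rw [hM₂, hM₁v, hc₂v]; simp
    have hIv : I = 1 := by
      rw [hI, hM₂v, hU0, hT0, hS1]
      have hint : (∫ x in (-1:ℝ)..1,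
          ((deriv (fun _ => (0:ℝ)) x)^2 * (1 - x^2) - 2 * x * deriv (fun _ => (0:ℝ)) x
            + (((-1:ℝ))^2 + (deriv (fun _ => (0:ℝ)) x)^2) * Real.exp (-2 * 0))) = 2 := by
        simp only [deriv_const']
        norm_num
      rw [hint]
      norm_num
    refine ⟨?_, ?_, ?_, ?_, ?_, hIv⟩
    · rw [hU0]
      apply Continuous.intervalIntegrable
      fun_prop
    · rw [hT0]; simp only [mul_zero]
      exact intervalIntegrable_const
    · rw [hS1]; exact intervalIntegrable_const
    · rw [hT0]
    · rw [hT0]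
  · -- ===================== case -1 < γ ≤ 0 =====================
    have hγ0 : γ ≤ 0 := hγ.2
    have h1γ : 0 < 1 + γ := by linarith
    have h2γ : 0 < 1 - γ := by linarith
    have hγ2 : 0 < 1 - γ^2 := by nlinarith
    have hγn : 0 ≤ -γ := by linarith
    set D : ℝ → ℝ := fun x => (1 + γ) * x^2 + 1 - γ with hDdef
    have hDx : ∀ x, D x = (1 + γ) * x^2 + 1 - γ := fun _ => rfl
    have hDpos : ∀ x, 0 < D x := by
      intro x; have := sq_nonneg x; rw [hDx]; nlinarith
    have hDne : ∀ x, D x ≠ 0 := fun x => (hDpos x).ne'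
    have hXne : ∀ x : ℝ, (1 + γ) * x^2 + 1 - γ ≠ 0 := fun x => by rw [← hDx]; exact hDne x
    have hYne : ∀ x : ℝ, 1 - γ + (1 + γ) * x^2 ≠ 0 := by
      intro x
      have := hXne x
      intro h; apply this; linarith
    have hXne' : ∀ x : ℝ, x^2 * (1 + γ) + 1 - γ ≠ 0 := fun x => by
      have := hXne x; intro h; apply this; linarith
    have hYne' : ∀ x : ℝ, 1 - γ + x^2 * (1 + γ) ≠ 0 := fun x => by
      have := hXne x; intro h; apply this; linarith
    have hD1 : D 1 = 2 := by rw [hDx]; ring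
    have hDm1 : D (-1) = 2 := by rw [hDx]; ring
    set t := Real.sqrt (-γ) with htdef
    set s := Real.sqrt (1 - γ^2) with hsdef
    set k := Real.sqrt (-γ * (1 - γ^2)) with hkdef
    have ht2 : t^2 = -γ := Real.sq_sqrt hγn
    have hs2 : s^2 = 1 - γ^2 := Real.sq_sqrt hγ2.le
    have hk : k = t * s := by rw [hkdef, htdef, hsdef, ← Real.sqrt_mul hγn]
    have hk2 : k^2 = -γ * (1 - γ^2) := Real.sq_sqrt (by nlinarith)
    have hspos : 0 < s := Real.sqrt_pos.mpr hγ2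
    have htnn : 0 ≤ t := Real.sqrt_nonneg _
    have hrpow : (-γ)^((3:ℝ)/2) = -γ * t := by
      have h1 : (-γ:ℝ)^((3:ℝ)/2) = ((-γ)^(3:ℕ) : ℝ)^((1:ℝ)/2) := by
        rw [← Real.rpow_natCast (-γ) 3, ← Real.rpow_mul hγn]; norm_num
      rw [h1, ← Real.sqrt_eq_rpow, show (-γ:ℝ)^(3:ℕ) = (-γ)^2 * (-γ) by ring,
        Real.sqrt_mul (sq_nonneg _), Real.sqrt_sq hγn, htdef]
    -- T in terms of D; nonnegativity on [-1,1]
    have hTeq : ∀ x, T x = k * (1 - x^2) / D x := by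
      intro x; rw [hT, hDx]; ring_nf
    have hTnn : ∀ x ∈ Icc (-1:ℝ) 1, 0 ≤ T x := by
      intro x hx
      rw [hTeq]
      have h1 : 0 ≤ 1 - x^2 := by nlinarith [hx.1, hx.2]
      exact div_nonneg (mul_nonneg (Real.sqrt_nonneg _) h1) (hDpos x).le
    -- exponentials
    have hexp2 : ∀ x, Real.exp (2 * U x) = 2 / D x := by
      intro x
      rw [hU]
      rw [show (2:ℝ) * ((1/2) * Real.log (2 / ((1 + γ) * x^2 + 1 - γ)))
          = Real.log (2 / ((1 + γ) * x^2 + 1 - γ)) by ring,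
        Real.exp_log (div_pos two_pos (by rw [← hDx]; exact hDpos x)), hDx]
    have hexp4 : ∀ x, Real.exp (4 * U x) = 4 / (D x)^2 := by
      intro x
      rw [show (4:ℝ) * U x = 2 * U x + 2 * U x by ring, Real.exp_add, hexp2]
      rw [div_mul_div_comm]
      norm_num [pow_two]
    have hexpm2 : ∀ x, Real.exp (-2 * U x) = D x / 2 := by
      intro x
      rw [show (-2:ℝ) * U x = -(2 * U x) by ring, Real.exp_neg, hexp2, inv_div]
    -- S on [-1,1]
    have hSIcc : ∀ x ∈ Icc (-1:ℝ) 1, S x = 2*t/D x - 4*t*(1-γ)/(D x)^2 := by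
      intro x hx
      rw [hS]
      simp only
      rw [abs_of_nonneg (hTnn x hx), hTeq, hexp2, hrpow, hk]
      rw [show s * (t * s * (1 - x^2) / D x) = t * (s^2 * (1 - x^2)) / D x by ring, hs2, hDx]
      field_simp [hXne x, hXne' x]
      ring
    -- derivatives
    have hU' : ∀ x, HasDerivAt U (-(1 + γ) * x / D x) x := by
      intro x
      rw [hU]
      have hq : HasDerivAt (fun y : ℝ => (1 + γ) * y^2 + 1 - γ) ((1 + γ) * (2 * x)) x := by
        have h := (((hasDerivAt_pow 2 x).const_mul (1 + γ)).add_const 1).sub_const γ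
        refine h.congr_deriv ?_
        push_cast
        ring
      have hdiv : HasDerivAt (fun y : ℝ => 2 / ((1 + γ) * y^2 + 1 - γ))
          ((0 * ((1+γ)*x^2+1-γ) - 2 * ((1+γ)*(2*x))) / ((1+γ)*x^2+1-γ)^2) x :=
        (hasDerivAt_const x 2).div hq (hXne x)
      have hlog := (hdiv.log (div_pos two_pos (by rw [← hDx]; exact hDpos x)).ne').const_mul (1/2 : ℝ)
      refine hlog.congr_deriv ?_
      rw [hDx]
      field_simp [hXne x, hXne' x]
      ring
    have hT' : ∀ x, HasDerivAt T (-4 * k * x / (D x)^2) x := by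
      intro x
      rw [hT]
      have hq : HasDerivAt (fun y : ℝ => 1 - γ + (1 + γ) * y^2) ((1 + γ) * (2 * x)) x := by
        have h := ((hasDerivAt_pow 2 x).const_mul (1 + γ)).const_add (1 - γ)
        refine h.congr_deriv ?_
        push_cast
        ring
      have h2 : HasDerivAt (fun y : ℝ => 1 - y^2) (-(2*x)) x := by
        refine ((hasDerivAt_const x (1:ℝ)).sub (hasDerivAt_pow 2 x)).congr_deriv ?_; simp
      have hnum := h2.const_mul (Real.sqrt (-γ * (1 - γ^2)))
      have hdiv := hnum.div hq (hYne x)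
      refine hdiv.congr_deriv ?_
      rw [hDx, ← hkdef]
      field_simp [hXne x, hYne x, hXne' x, hYne' x]
      ring
    have hdU : ∀ x, deriv U x = -(1+γ)*x/D x := fun x => (hU' x).deriv
    have hdT : ∀ x, deriv T x = -4*k*x/(D x)^2 := fun x => (hT' x).deriv
    -- continuity facts
    have hDcont : Continuous D := by
      rw [hDdef]; fun_prop
    have hc1 : Continuous fun x => (D x)⁻¹ := hDcont.inv₀ hDne
    have hc2 : Continuous fun x => ((D x)^2)⁻¹ :=
      (hDcont.pow 2).inv₀ (fun x => pow_ne_zero _ (hDne x))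
    have hc3 : Continuous fun x => ((D x)^3)⁻¹ :=
      (hDcont.pow 3).inv₀ (fun x => pow_ne_zero _ (hDne x))
    have hUcont : Continuous U := by
      rw [hU]
      exact continuous_const.mul
        ((continuous_const.div (by fun_prop) hXne).log
          (fun x => div_ne_zero two_ne_zero (hXne x)))
    have hTcont : Continuous T := by
      rw [hT]
      exact (continuous_const.mul (by fun_prop)).div (by fun_prop) hYne
    have hScont : Continuous S := by
      rw [hS]
      exact ((continuous_const.add (continuous_const.mul hTcont.abs)).neg).mul
        ((continuous_const.mul hUcont).rexp)
    have hii : ∀ {g : ℝ → ℝ}, Continuous g → IntervalIntegrable g volume (-1) 1 :=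
      fun h => h.intervalIntegrable _ _
    -- the basic reduction integrals
    set J := ∫ x in (-1:ℝ)..1, (D x)⁻¹ with hJdef
    have hqD : ∀ x : ℝ, HasDerivAt D ((1 + γ) * (2 * x)) x := by
      intro x
      have h := (((hasDerivAt_pow 2 x).const_mul (1 + γ)).add_const 1).sub_const γ
      refine h.congr_deriv ?_
      push_cast
      ring
    have hI2 : (∫ x in (-1:ℝ)..1, ((D x)^2)⁻¹) = (1 + J)/(2*(1-γ)) := by
      have hF : ∀ x ∈ uIcc (-1:ℝ) 1, HasDerivAt (fun y => y / D y)
          (2*(1-γ)*((D x)^2)⁻¹ - (D x)⁻¹) x := by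
        intro x _
        have hdiv := (hasDerivAt_id x).div (hqD x) (hDne x)
        refine hdiv.congr_deriv ?_
        simp only [id_eq, Pi.pow_apply]
        rw [hDx]
        field_simp [hXne x]
        ring
      have hcont : Continuous fun x => 2*(1-γ)*((D x)^2)⁻¹ - (D x)⁻¹ :=
        (continuous_const.mul hc2).sub hc1
      have heq := integral_eq_sub_of_hasDerivAt hF (hii hcont)
      rw [integral_sub (hii (continuous_const.fun_mul hc2)) (hii hc1),
        intervalIntegral.integral_const_mul] at heq
      simp only [hD1, hDm1] at heq
      norm_num at heq
      rw [eq_div_iff (by positivity : (2*(1-γ)) ≠ 0)]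
      linarith
    have hI3 : (∫ x in (-1:ℝ)..1, ((D x)^3)⁻¹)
        = (1/2 + 3*((1 + J)/(2*(1-γ))))/(4*(1-γ)) := by
      have hF : ∀ x ∈ uIcc (-1:ℝ) 1, HasDerivAt (fun y => y / (D y)^2)
          (4*(1-γ)*((D x)^3)⁻¹ - 3*((D x)^2)⁻¹) x := by
        intro x _
        have hpow := (hqD x).pow 2
        have hdiv := (hasDerivAt_id x).div hpow (pow_ne_zero 2 (hDne x))
        refine hdiv.congr_deriv ?_
        simp only [id_eq, Pi.pow_apply]
        rw [hDx]
        field_simp [hXne x]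
        ring
      have hcont : Continuous fun x => 4*(1-γ)*((D x)^3)⁻¹ - 3*((D x)^2)⁻¹ :=
        (continuous_const.mul hc3).sub (continuous_const.mul hc2)
      have heq := integral_eq_sub_of_hasDerivAt hF (hii hcont)
      rw [integral_sub (hii (continuous_const.fun_mul hc3)) (hii (continuous_const.fun_mul hc2)),
        intervalIntegral.integral_const_mul, intervalIntegral.integral_const_mul, hI2] at heq
      simp only [hD1, hDm1] at heq
      norm_num at heq
      rw [eq_div_iff (by positivity : (4*(1-γ)) ≠ 0)]
      linarith
    -- the master splitting identity
    have key : ∀ p₀ p₁ p₂ p₃ : ℝ, (∫ x in (-1:ℝ)..1,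
        (p₀ + p₁ * (D x)⁻¹ + p₂ * ((D x)^2)⁻¹ + p₃ * ((D x)^3)⁻¹))
        = p₀*2 + p₁*J + p₂*((1 + J)/(2*(1-γ)))
          + p₃*((1/2 + 3*((1 + J)/(2*(1-γ))))/(4*(1-γ))) := by
      intro p₀ p₁ p₂ p₃
      rw [integral_add (by
            exact hii (by fun_prop)) (hii (continuous_const.fun_mul hc3)),
        integral_add (by exact hii (by fun_prop)) (hii (continuous_const.fun_mul hc2)),
        integral_add (intervalIntegrable_const) (hii (continuous_const.fun_mul hc1)),
        intervalIntegral.integral_const, intervalIntegral.integral_const_mul, intervalIntegral.integral_const_mul, intervalIntegral.integral_const_mul,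
        hI2, hI3]
      simp only [smul_eq_mul]
      ring
    -- evaluation of the four integrals
    have hC : (∫ x in (-1:ℝ)..1, Real.exp (4 * U x) * (1 - x^2))
        = 4*(1+γ*J)/(1-γ^2) := by
      have e1 : EqOn (fun x => Real.exp (4 * U x) * (1 - x^2))
          (fun x => (0:ℝ) + (-(4/(1+γ))) * (D x)⁻¹ + (8/(1+γ)) * ((D x)^2)⁻¹
            + 0 * ((D x)^3)⁻¹) (uIcc (-1:ℝ) 1) := by
        intro x _
        simp only
        rw [hexp4 x, hDx]
        field_simp [hXne x]
        ring
      rw [integral_congr e1, key]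
      field_simp
      ring
    have hSint : (∫ x in (-1:ℝ)..1, S x) = -2*t := by
      have e1 : EqOn S (fun x => (0:ℝ) + (2*t) * (D x)⁻¹ + (-(4*t*(1-γ))) * ((D x)^2)⁻¹
          + 0 * ((D x)^3)⁻¹) (uIcc (-1:ℝ) 1) := by
        intro x hx
        rw [uIcc_of_le (by norm_num : (-1:ℝ) ≤ 1)] at hx
        rw [hSIcc x hx]
        ring
      rw [integral_congr e1, key]
      field_simp
      ring
    have hSTint : (∫ x in (-1:ℝ)..1, S x * T x) = γ*(γ+J)*s/(1-γ^2) := by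
      have e1 : EqOn (fun x => S x * T x)
          (fun x => (0:ℝ) + (2*γ*s/(1+γ)) * (D x)⁻¹
            + (-(2*γ*s/(1+γ))*(4-2*γ)) * ((D x)^2)⁻¹
            + ((2*γ*s/(1+γ))*(4*(1-γ))) * ((D x)^3)⁻¹) (uIcc (-1:ℝ) 1) := by
        intro x hx
        rw [uIcc_of_le (by norm_num : (-1:ℝ) ≤ 1)] at hx
        simp only
        calc S x * T x
            = t^2 * (-2*s*(2*(1-γ) - D x)*(1 - x^2)/(D x)^3) := by
              rw [hSIcc x hx, hTeq x, hk]
              field_simp [hDne x]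
              ring
          _ = -γ * (-2*s*(2*(1-γ) - D x)*(1 - x^2)/(D x)^3) := by rw [ht2]
          _ = (0:ℝ) + (2*γ*s/(1+γ)) * (D x)⁻¹
              + (-(2*γ*s/(1+γ))*(4-2*γ)) * ((D x)^2)⁻¹
              + ((2*γ*s/(1+γ))*(4*(1-γ))) * ((D x)^3)⁻¹ := by
              rw [hDx]
              field_simp [hXne x]
              ring
      rw [integral_congr e1, key]
      field_simp
      ring
    have hfint : (∫ x in (-1:ℝ)..1,
        ((deriv U x)^2 * (1 - x^2) - 2 * x * deriv U x
          + ((S x)^2 + (deriv T x)^2) * Real.exp (-2 * U x))) = 1 - γ*J := by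
      have e1 : EqOn (fun x => (deriv U x)^2 * (1 - x^2) - 2 * x * deriv U x
            + ((S x)^2 + (deriv T x)^2) * Real.exp (-2 * U x))
          (fun x => (1:ℝ) + (1-γ) * (D x)⁻¹ + (-(2*(1-γ))) * ((D x)^2)⁻¹
            + 0 * ((D x)^3)⁻¹) (uIcc (-1:ℝ) 1) := by
        intro x hx
        rw [uIcc_of_le (by norm_num : (-1:ℝ) ≤ 1)] at hx
        simp only
        have hg1 : (-(1+γ)*x/D x)^2 * (1 - x^2) - 2*x*(-(1+γ)*x/D x)
            = 1 + (1+γ) * (D x)⁻¹ + (-(2*(1-γ))) * ((D x)^2)⁻¹ := by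
          rw [hDx]
          field_simp [hXne x]
          ring
        have hg2 : (2*t/D x - 4*t*(1-γ)/(D x)^2)^2 * (D x/2)
            = (-(2*γ)) * (D x)⁻¹ + (8*γ*(1-γ)) * ((D x)^2)⁻¹
              + (-(8*γ*(1-γ)^2)) * ((D x)^3)⁻¹ := by
          rw [show (2*t/D x - 4*t*(1-γ)/(D x)^2)^2 * (D x/2)
              = t^2 * ((2/D x - 4*(1-γ)/(D x)^2)^2 * (D x/2)) by ring, ht2]
          field_simp [hDne x]
          ring
        have hg3 : (-4*k*x/(D x)^2)^2 * (D x/2)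
            = (-(8*γ*(1-γ))) * ((D x)^2)⁻¹ + (8*γ*(1-γ)^2) * ((D x)^3)⁻¹ := by
          rw [show (-4*k*x/(D x)^2)^2 * (D x/2)
              = k^2 * ((4*x/(D x)^2)^2 * (D x/2)) by ring, hk2]
          rw [hDx]
          field_simp [hXne x]
          ring
        calc (deriv U x)^2 * (1 - x^2) - 2 * x * deriv U x
              + ((S x)^2 + (deriv T x)^2) * Real.exp (-2 * U x)
            = ((-(1+γ)*x/D x)^2 * (1 - x^2) - 2*x*(-(1+γ)*x/D x))
              + (2*t/D x - 4*t*(1-γ)/(D x)^2)^2 * (D x/2)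
              + (-4*k*x/(D x)^2)^2 * (D x/2) := by
              rw [hdU x, hdT x, hexpm2 x, hSIcc x hx]
              ring
          _ = (1:ℝ) + (1-γ) * (D x)⁻¹ + (-(2*(1-γ))) * ((D x)^2)⁻¹
              + 0 * ((D x)^3)⁻¹ := by
              rw [hg1, hg2, hg3]
              ring
      rw [integral_congr e1, key]
      field_simp
      ring
    -- positivity facts
    have hPnn : 0 ≤ 1 + γ*J := by
      have h0 : 0 ≤ ∫ x in (-1:ℝ)..1, Real.exp (4 * U x) * (1 - x^2) := by
        apply intervalIntegral.integral_nonneg (by norm_num)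
        intro u hu
        have : 0 ≤ 1 - u^2 := by nlinarith [hu.1, hu.2]
        positivity
      rw [hC] at h0
      have h1 := mul_nonneg h0 hγ2.le
      rw [div_mul_cancel₀ _ hγ2.ne'] at h1
      linarith
    have hJ1 : 1 ≤ J := by
      have h0 : 0 ≤ ∫ x in (-1:ℝ)..1, ((D x)⁻¹ - 2⁻¹) := by
        apply intervalIntegral.integral_nonneg (by norm_num)
        intro u hu
        have hD2 : D u ≤ 2 := by
          rw [hDx]
          have hu2 : u^2 ≤ 1 := by nlinarith [hu.1, hu.2]
          nlinarith [mul_le_mul_of_nonneg_left hu2 h1γ.le]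
        have h2i := inv_anti₀ (hDpos u) hD2
        show (0:ℝ) ≤ (D u)⁻¹ - 2⁻¹
        linarith
      rw [integral_sub (hii hc1) intervalIntegrable_const,
        intervalIntegral.integral_const] at h0
      simp only [smul_eq_mul] at h0
      norm_num at h0
      linarith
    -- c₃, M₁
    have hc₃4 : c₃^4 = 4*γ^2 := by
      rw [hc₃, hSint, mul_pow]
      have h2' : Real.sqrt 2 ^ 2 = 2 := Real.sq_sqrt (by norm_num)
      have h4 : (Real.sqrt 2)^4 = 4 := by nlinarith [h2']
      rw [div_pow, one_pow, h4, show (-2*t)^4 = 16*(t^2)^2 by ring, ht2]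
      ring
    have hM₁v : M₁ = 4 - 4*γ^2 := by
      rw [hM₁, hc₃4]
      exact max_eq_right (by nlinarith)
    have hsqM₁ : Real.sqrt M₁ = 2*s := by
      rw [hM₁v, show 4 - 4*γ^2 = (2*s)^2 by rw [mul_pow, hs2]; ring,
        Real.sqrt_sq (by positivity)]
    -- c₂
    have hc₂v : c₂ = γ*(γ+J)*s/(1-γ^2) := by rw [hc₂, hSTint]
    have hc₂np : c₂ ≤ 0 := by
      rw [hc₂v]
      apply div_nonpos_of_nonpos_of_nonneg _ hγ2.le
      apply mul_nonpos_of_nonpos_of_nonneg _ hspos.le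
      apply mul_nonpos_of_nonpos_of_nonneg hγ0
      linarith
    have habs : |c₂| = -c₂ := abs_of_nonpos hc₂np
    -- numerator and c₁
    have hnum : Real.sqrt M₁ - 2*|c₂| = 2*(1+γ*J)/s := by
      rw [hsqM₁, habs, hc₂v]
      rw [show (1:ℝ) - γ^2 = s^2 from hs2.symm]
      field_simp
      linear_combination hs2
    have hc₁v : c₁ = 2*Real.sqrt (1+γ*J)/s := by
      rw [hc₁, hC]
      rw [show 4*(1+γ*J)/(1-γ^2) = (2*Real.sqrt (1+γ*J)/s)^2 by
        rw [div_pow, mul_pow, Real.sq_sqrt hPnn, hs2]; ring]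
      exact Real.sqrt_sq (by positivity)
    -- M₂
    have hM₂v : M₂ = Real.sqrt (1+γ*J) := by
      rw [hM₂, hnum, hc₁v]
      rcases eq_or_lt_of_le hPnn with hP0 | hPpos
      · rw [← hP0]
        simp
      · have hsq : 0 < Real.sqrt (1+γ*J) := Real.sqrt_pos.mpr hPpos
        have : 2*(1+γ*J)/s / (2*Real.sqrt (1+γ*J)/s) = Real.sqrt (1+γ*J) := by
          field_simp
          linear_combination (-1:ℝ) * (Real.sq_sqrt hPnn)
        rw [this]
        exact max_eq_right hsq.le
    have hM₂sq : M₂^2 = 1 + γ*J := by rw [hM₂v, Real.sq_sqrt hPnn]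
    -- conclusion
    refine ⟨?_, ?_, ?_, ?_, ?_, ?_⟩
    · exact hii (((continuous_const.mul hUcont).rexp).mul (by fun_prop))
    · exact hii (hScont.mul hTcont)
    · exact hii hScont
    · rw [hTeq]; norm_num
    · rw [hTeq]; norm_num
    · rw [hI, hfint, hM₂sq]
      ring
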